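/- Let c : ℕ × ℕ → ℝ be a double sequence with Σ_{j,k} c(j,k)² < ∞. Then the sequence of partial sums (Σ_{j=0}^{N} c(j,j)·(X_j² − 1))_{N} converges in L²(ν), and the sequence of partial sums (Σ_{j=1}^{N} (Σ_{k=0}^{j−1} c(j,k)·X_k)·X_j)_{N} converges in L²(ν). -/

import Mathlib

open MeasureTheory Filter


section helpers

variable {E : Type*} [MeasurableSpace E] {ν : Measure E} [IsProbabilityMeasure ν]

/-- A function of the coordinates in `s` is independent of `X j` for `j ∉ s`. -/
lemma indep_causal_aux {X : ℕ → E → ℝ} (hXm : ∀ k, Measurable (X k))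
    (hindep : ProbabilityTheory.iIndepFun (m :=
      fun _ : ℕ => (inferInstance : MeasurableSpace ℝ)) X ν)
    {j : ℕ} {s : Finset ℕ} (hj : j ∉ s) (φ : (ℕ → ℝ) → ℝ) (hφ : Measurable φ)
    (hsupp : ∀ v w : ℕ → ℝ, (∀ k ∈ s, v k = w k) → φ v = φ w) :
    ProbabilityTheory.IndepFun (fun a => φ (fun k => X k a)) (X j) ν := by
  have h := hindep.indepFun_finset s {j} (Finset.disjoint_singleton_right.mpr hj) hXm
  have hφ' : Measurable (fun v : (↥s → ℝ) => φ (fun k => if h : k ∈ s then v ⟨k, h⟩ else 0)) := by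
    apply hφ.comp
    apply measurable_pi_lambda
    intro k
    by_cases h : k ∈ s
    · simpa [h] using measurable_pi_apply (⟨k, h⟩ : ↥s)
    · simpa [h] using measurable_const
  have hψ : Measurable (fun w : (↥({j} : Finset ℕ) → ℝ) =>
      w ⟨j, Finset.mem_singleton_self j⟩) := measurable_pi_apply _
  have h2 := h.comp hφ' hψ
  convert h2 using 2 with a
  exact hsupp _ _ (fun k hk => by simp [hk])
  rfl

lemma Lp_coeFn_sum {ι : Type*} (s : Finset ι) (F : ι → Lp ℝ 2 ν) :
    (((∑ j ∈ s, F j : Lp ℝ 2 ν)) : E → ℝ) =ᵐ[ν] fun ω => ∑ j ∈ s, (F j : E → ℝ) ω := by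
  induction s using Finset.cons_induction with
  | empty => simp only [Finset.sum_empty]; exact Lp.coeFn_zero ℝ 2 ν
  | cons a s ha ih =>
    filter_upwards [Lp.coeFn_add (F a) (∑ j ∈ s, F j), ih] with ω h1 h2
    rw [Finset.sum_cons, h1, Pi.add_apply, h2, Finset.sum_cons]

/-- Orthogonal series with square-summable norms converge in L². -/
lemma orth_sum_L2 (f : ℕ → E → ℝ) (hf : ∀ j, MemLp (f j) 2 ν)
    (horth : ∀ i j, i ≠ j → ∫ ω, f i ω * f j ω ∂ν = 0)
    (hsum : Summable fun j => ∫ ω, f j ω ^ 2 ∂ν) :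
    ∃ g : E → ℝ, MemLp g 2 ν ∧
      Tendsto (fun N : ℕ =>
          eLpNorm (fun ω => (∑ j ∈ Finset.range (N + 1), f j ω) - g ω) 2 ν)
        atTop (nhds 0) := by
  set F : ℕ → Lp ℝ 2 ν := fun j => (hf j).toLp (f j) with hF
  have hinner : ∀ i j, (inner ℝ (F i) (F j) : ℝ) = ∫ ω, f i ω * f j ω ∂ν := by
    intro i j
    rw [MeasureTheory.L2.inner_def]
    apply integral_congr_ae
    filter_upwards [(hf i).coeFn_toLp, (hf j).coeFn_toLp] with ω h1 h2
    simp [hF, h1, h2, RCLike.inner_apply, starRingEnd_apply, mul_comm]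
  have hnormsq : ∀ j, ‖F j‖ ^ 2 = ∫ ω, f j ω ^ 2 ∂ν := by
    intro j
    rw [← real_inner_self_eq_norm_sq, hinner]
    simp [sq]
  have hpyth : ∀ t : Finset ℕ, ‖∑ j ∈ t, F j‖ ^ 2 = ∑ j ∈ t, ‖F j‖ ^ 2 := by
    intro t
    rw [← real_inner_self_eq_norm_sq, sum_inner]
    refine Finset.sum_congr rfl fun i hi => ?_
    rw [inner_sum, Finset.sum_eq_single i
      (fun b _ hb => by rw [hinner]; exact horth i b (fun h => hb h.symm))
      (fun h => absurd hi h)]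
    exact real_inner_self_eq_norm_sq _
  have hsum' : Summable fun j => ‖F j‖ ^ 2 := hsum.congr fun j => (hnormsq j).symm
  have hFs : Summable F := by
    rw [summable_iff_vanishing]
    intro e he
    obtain ⟨ε, hε, hball⟩ := Metric.mem_nhds_iff.mp he
    obtain ⟨s, hs⟩ := (summable_iff_vanishing.mp hsum') (Set.Iio (ε ^ 2))
      (Iio_mem_nhds (by positivity))
    refine ⟨s, fun t ht => hball ?_⟩
    rw [mem_ball_zero_iff]
    have h2 : ‖∑ j ∈ t, F j‖ ^ 2 < ε ^ 2 := by
      rw [hpyth]; exact hs t ht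
    exact lt_of_pow_lt_pow_left₀ 2 hε.le h2
  obtain ⟨G, hG⟩ := hFs
  refine ⟨G, Lp.memLp G, ?_⟩
  have htend : Tendsto (fun N : ℕ => ∑ j ∈ Finset.range (N + 1), F j) atTop (nhds G) :=
    hG.tendsto_sum_nat.comp (tendsto_add_atTop_nat 1)
  have hnorm0 : Tendsto (fun N : ℕ => ‖(∑ j ∈ Finset.range (N + 1), F j) - G‖) atTop (nhds 0) :=
    tendsto_iff_norm_sub_tendsto_zero.mp htend
  have key : ∀ N : ℕ, eLpNorm (fun ω => (∑ j ∈ Finset.range (N + 1), f j ω) - G ω) 2 ν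
      = ENNReal.ofReal ‖(∑ j ∈ Finset.range (N + 1), F j) - G‖ := by
    intro N
    have h1 : (((∑ j ∈ Finset.range (N + 1), F j : Lp ℝ 2 ν)) : E → ℝ)
        =ᵐ[ν] fun ω => ∑ j ∈ Finset.range (N + 1), f j ω := by
      filter_upwards [Lp_coeFn_sum (Finset.range (N + 1)) F,
        eventually_countable_forall.2 (fun j : ℕ => (hf j).coeFn_toLp)] with ω h h'
      rw [h]
      exact Finset.sum_congr rfl fun j _ => h' j
    have hae : (fun ω => (∑ j ∈ Finset.range (N + 1), f j ω) - G ω)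
        =ᵐ[ν] ((∑ j ∈ Finset.range (N + 1), F j) - G : Lp ℝ 2 ν) := by
      filter_upwards [h1, Lp.coeFn_sub (∑ j ∈ Finset.range (N + 1), F j) G] with ω h h2
      rw [h2, Pi.sub_apply, h]
    rw [eLpNorm_congr_ae hae, ← ENNReal.ofReal_toReal (Lp.eLpNorm_ne_top _), ← Lp.norm_def]
  have := ENNReal.tendsto_ofReal (a := (0:ℝ)) hnorm0
  rw [ENNReal.ofReal_zero] at this
  simpa only [key] using this

end helpers

/-- Let `(X k)` be mutually independent, centered, reduced real
random variables with uniformly bounded fourth moments, and `c : ℕ × ℕ → ℝ`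
square-summable. Then the partial sums `∑_{j=0}^N c (j,j)·(X j ² - 1)` and
`∑_{j=1}^N (∑_{k=0}^{j-1} c (j,k)·X k)·X j` both converge in `L²(ν)`. -/
theorem stmt_17 {E : Type*} [MeasurableSpace E] (ν : Measure E)
    [IsProbabilityMeasure ν] (X : ℕ → E → ℝ) (hXm : ∀ k, Measurable (X k))
    (hindep : ProbabilityTheory.iIndepFun (m :=
      fun _ : ℕ => (inferInstance : MeasurableSpace ℝ)) X ν)
    (hcent : ∀ k, ∫ ω, X k ω ∂ν = 0)
    (hred : ∀ k, ∫ ω, X k ω ^ 2 ∂ν = 1)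
    (hX4 : ∀ k, MemLp (X k) 4 ν)
    (hsup : ∃ C : ℝ, ∀ k, ∫ ω, X k ω ^ 4 ∂ν ≤ C)
    (c : ℕ × ℕ → ℝ) (hc : Summable fun jk : ℕ × ℕ => c jk ^ 2) :
    (∃ g : E → ℝ, MemLp g 2 ν ∧
      Tendsto (fun N : ℕ => eLpNorm
        (fun ω => (∑ j ∈ Finset.range (N + 1), c (j, j) * (X j ω ^ 2 - 1)) - g ω)
        2 ν) atTop (nhds 0)) ∧
    (∃ g : E → ℝ, MemLp g 2 ν ∧
      Tendsto (fun N : ℕ => eLpNorm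
        (fun ω => (∑ j ∈ Finset.Icc 1 N,
          (∑ k ∈ Finset.range j, c (j, k) * X k ω) * X j ω) - g ω)
        2 ν) atTop (nhds 0)) := by
  classical
  obtain ⟨C, hC⟩ := hsup
  have hX2 : ∀ k, MemLp (X k) 2 ν := fun k => (hX4 k).mono_exponent (by norm_num)
  have hmul44 : ∀ (f g : E → ℝ), MemLp f 4 ν → MemLp g 4 ν →
      MemLp (fun ω => f ω * g ω) 2 ν := by
    intro f g hfm hgm
    exact hgm.smul (φ := f) hfm
      (hpqr := ⟨by simp only [← one_div]; rw [ENNReal.div_add_div_same, ENNReal.div_eq_div_iff] <;> norm_num⟩)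
  have hmul22 : ∀ (f g : E → ℝ), MemLp f 2 ν → MemLp g 2 ν →
      Integrable (fun ω => f ω * g ω) ν := by
    intro f g hfm hgm
    rw [← memLp_one_iff_integrable]
    exact hgm.smul (φ := f) hfm
      (hpqr := ⟨by simp only [← one_div]; rw [ENNReal.div_add_div_same, ENNReal.div_eq_div_iff] <;> norm_num⟩)
  have hXsq : ∀ k, MemLp (fun ω => X k ω ^ 2) 2 ν := by
    intro k
    have := hmul44 (X k) (X k) (hX4 k) (hX4 k)
    simpa [← sq] using this
  have hint2 : ∀ k, Integrable (fun ω => X k ω ^ 2) ν :=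
    fun k => memLp_one_iff_integrable.mp ((hXsq k).mono_exponent (by norm_num))
  have hint4 : ∀ k, Integrable (fun ω => X k ω ^ 4) ν := by
    intro k
    have := hmul22 _ _ (hXsq k) (hXsq k)
    have heq : (fun ω => X k ω ^ 2 * X k ω ^ 2) = fun ω => X k ω ^ 4 := by
      funext ω; ring
    rwa [heq] at this
  constructor
  · -- Part 1
    have hf1mem : ∀ j, MemLp (fun ω => c (j, j) * (X j ω ^ 2 - 1)) 2 ν :=
      fun j => ((hXsq j).sub (memLp_const 1)).const_mul _
    have hm1 : ∀ j, Measurable (fun ω => c (j, j) * (X j ω ^ 2 - 1)) :=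
      fun j => (((hXm j).pow_const 2).sub measurable_const).const_mul _
    have h0 : ∀ (k : ℕ) (a : ℝ), ∫ ω, a * (X k ω ^ 2 - 1) ∂ν = 0 := by
      intro k a
      rw [integral_const_mul, integral_sub (hint2 k) (integrable_const 1), hred k]
      simp
    have horth1 : ∀ i j, i ≠ j →
        ∫ ω, (c (i, i) * (X i ω ^ 2 - 1)) * (c (j, j) * (X j ω ^ 2 - 1)) ∂ν = 0 := by
      intro i j hij
      have hind := (hindep.indepFun hij).comp
        (φ := fun x : ℝ => c (i, i) * (x ^ 2 - 1)) (ψ := fun x : ℝ => c (j, j) * (x ^ 2 - 1))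
        (((measurable_id.pow_const 2).sub measurable_const).const_mul _)
        (((measurable_id.pow_const 2).sub measurable_const).const_mul _)
      have := hind.integral_fun_mul_eq_mul_integral (hm1 i).aestronglyMeasurable (hm1 j).aestronglyMeasurable
      simpa [Function.comp_def, h0] using this
    have hvar : ∀ k, ∫ ω, (X k ω ^ 2 - 1) ^ 2 ∂ν ≤ max C 1 := by
      intro k
      have heq : (fun ω => (X k ω ^ 2 - 1) ^ 2) = fun ω => (X k ω ^ 4 - 2 * X k ω ^ 2) + 1 := by
        funext ω; ring
      calc ∫ ω, (X k ω ^ 2 - 1) ^ 2 ∂ν = ∫ ω, ((X k ω ^ 4 - 2 * X k ω ^ 2) + 1) ∂ν := by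
            rw [heq]
        _ = (∫ ω, X k ω ^ 4 ∂ν - 2 * ∫ ω, X k ω ^ 2 ∂ν) + 1 := by
            have hsub : Integrable (fun ω => X k ω ^ 4 - 2 * X k ω ^ 2) ν :=
              (hint4 k).sub ((hint2 k).const_mul 2)
            rw [integral_add hsub (integrable_const 1),
              integral_sub (hint4 k) ((hint2 k).const_mul 2), integral_const_mul]
            simp
        _ ≤ (C - 2 * 1) + 1 := by rw [hred k]; linarith [hC k]
        _ ≤ max C 1 := by have := le_max_left C 1; linarith
    have hsum1 : Summable fun j => ∫ ω, (c (j, j) * (X j ω ^ 2 - 1)) ^ 2 ∂ν := by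
      apply summable_of_sum_range_le (c := max C 1 * ∑' p : ℕ × ℕ, c p ^ 2)
        (fun j => integral_nonneg fun ω => sq_nonneg _)
      intro n
      have hstep : ∀ j : ℕ, ∫ ω, (c (j, j) * (X j ω ^ 2 - 1)) ^ 2 ∂ν
          = c (j, j) ^ 2 * ∫ ω, (X j ω ^ 2 - 1) ^ 2 ∂ν := by
        intro j
        rw [← integral_const_mul]
        congr 1; funext ω; ring
      calc ∑ j ∈ Finset.range n, ∫ ω, (c (j, j) * (X j ω ^ 2 - 1)) ^ 2 ∂ν
          ≤ ∑ j ∈ Finset.range n, c (j, j) ^ 2 * max C 1 := by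
            refine Finset.sum_le_sum fun j _ => ?_
            rw [hstep j]
            exact mul_le_mul_of_nonneg_left (hvar j) (sq_nonneg _)
        _ = (∑ j ∈ Finset.range n, c (j, j) ^ 2) * max C 1 := by rw [← Finset.sum_mul]
        _ ≤ (∑' p : ℕ × ℕ, c p ^ 2) * max C 1 := by
            refine mul_le_mul_of_nonneg_right ?_ (le_trans zero_le_one (le_max_right C 1))
            have himg : ∑ p ∈ (Finset.range n).image (fun j : ℕ => ((j, j) : ℕ × ℕ)), c p ^ 2
                = ∑ j ∈ Finset.range n, c (j, j) ^ 2 :=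
              Finset.sum_image (fun x _ y _ h => (Prod.ext_iff.mp h).1)
            rw [← himg]
            exact Summable.sum_le_tsum _ (fun p _ => sq_nonneg _) hc
        _ = max C 1 * ∑' p : ℕ × ℕ, c p ^ 2 := mul_comm _ _
    exact orth_sum_L2 (fun j ω => c (j, j) * (X j ω ^ 2 - 1)) hf1mem horth1 hsum1
  · -- Part 2
    have hS4 : ∀ j, MemLp (fun ω => ∑ k ∈ Finset.range j, c (j, k) * X k ω) 4 ν :=
      fun j => memLp_finset_sum _ (fun k _ => (hX4 k).const_mul _)
    have hSm : ∀ j, Measurable (fun ω => ∑ k ∈ Finset.range j, c (j, k) * X k ω) :=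
      fun j => Finset.measurable_sum _ (fun k _ => (hXm k).const_mul _)
    have hf2mem : ∀ j, MemLp (fun ω => (∑ k ∈ Finset.range j, c (j, k) * X k ω) * X j ω) 2 ν :=
      fun j => hmul44 _ _ (hS4 j) (hX4 j)
    have hindS : ∀ j, ProbabilityTheory.IndepFun
        (fun ω => ∑ k ∈ Finset.range j, c (j, k) * X k ω) (X j) ν := by
      intro j
      exact indep_causal_aux hXm hindep (s := Finset.range j) (by simp)
        (φ := fun v => ∑ k ∈ Finset.range j, c (j, k) * v k)
        (Finset.measurable_sum _ fun k _ => (measurable_pi_apply k).const_mul _)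
        (fun v w h => Finset.sum_congr rfl fun k hk => by rw [h k hk])
    have hS2 : ∀ j, ∫ ω, (∑ k ∈ Finset.range j, c (j, k) * X k ω) ^ 2 ∂ν
        = ∑ k ∈ Finset.range j, c (j, k) ^ 2 := by
      intro j
      have hexp : ∀ ω : E, (∑ k ∈ Finset.range j, c (j, k) * X k ω) ^ 2
          = ∑ k ∈ Finset.range j, ∑ l ∈ Finset.range j,
              (c (j, k) * X k ω) * (c (j, l) * X l ω) := by
        intro ω; rw [sq, Finset.sum_mul_sum]
      simp_rw [hexp]
      rw [integral_finset_sum _ (fun k _ => integrable_finset_sum _ (fun l _ =>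
        hmul22 _ _ ((hX2 k).const_mul _) ((hX2 l).const_mul _)))]
      refine Finset.sum_congr rfl fun k hk => ?_
      rw [integral_finset_sum _ (fun l _ =>
        hmul22 _ _ ((hX2 k).const_mul _) ((hX2 l).const_mul _))]
      rw [Finset.sum_eq_single k ?_ (fun h => absurd hk h)]
      · have hsq : ∀ ω : E, (c (j, k) * X k ω) * (c (j, k) * X k ω)
            = c (j, k) ^ 2 * X k ω ^ 2 := fun ω => by ring
        simp_rw [hsq]
        rw [integral_const_mul, hred k, mul_one]
      · intro l hl hlk
        have h1 : ∀ ω : E, (c (j, k) * X k ω) * (c (j, l) * X l ω)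
            = (c (j, k) * c (j, l)) * (X k ω * X l ω) := fun ω => by ring
        simp_rw [h1]
        rw [integral_const_mul,
          (hindep.indepFun (Ne.symm hlk)).integral_fun_mul_eq_mul_integral (hXm k).aestronglyMeasurable
            (hXm l).aestronglyMeasurable, hcent k]
        simp
    have hf2sq : ∀ j, ∫ ω, ((∑ k ∈ Finset.range j, c (j, k) * X k ω) * X j ω) ^ 2 ∂ν
        = ∑ k ∈ Finset.range j, c (j, k) ^ 2 := by
      intro j
      have hind2 := (hindS j).comp (φ := fun x : ℝ => x ^ 2) (ψ := fun x : ℝ => x ^ 2)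
        (measurable_id.pow_const 2) (measurable_id.pow_const 2)
      have hmul := hind2.integral_fun_mul_eq_mul_integral ((hSm j).pow_const 2).aestronglyMeasurable
        ((hXm j).pow_const 2).aestronglyMeasurable
      calc ∫ ω, ((∑ k ∈ Finset.range j, c (j, k) * X k ω) * X j ω) ^ 2 ∂ν
          = ∫ ω, (∑ k ∈ Finset.range j, c (j, k) * X k ω) ^ 2 * X j ω ^ 2 ∂ν := by
            simp_rw [mul_pow]
        _ = (∫ ω, (∑ k ∈ Finset.range j, c (j, k) * X k ω) ^ 2 ∂ν) * ∫ ω, X j ω ^ 2 ∂ν := by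
            simpa [Function.comp_def] using hmul
        _ = ∑ k ∈ Finset.range j, c (j, k) ^ 2 := by rw [hS2 j, hred j, mul_one]
    have hsum2 : Summable fun j =>
        ∫ ω, ((∑ k ∈ Finset.range j, c (j, k) * X k ω) * X j ω) ^ 2 ∂ν := by
      apply summable_of_sum_range_le (c := ∑' p : ℕ × ℕ, c p ^ 2)
        (fun j => integral_nonneg fun ω => sq_nonneg _)
      intro n
      calc ∑ j ∈ Finset.range n, ∫ ω, ((∑ k ∈ Finset.range j, c (j, k) * X k ω) * X j ω) ^ 2 ∂ν
          = ∑ j ∈ Finset.range n, ∑ k ∈ Finset.range j, c (j, k) ^ 2 :=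
            Finset.sum_congr rfl fun j _ => hf2sq j
        _ ≤ ∑ j ∈ Finset.range n, ∑ k ∈ Finset.range n, c (j, k) ^ 2 :=
            Finset.sum_le_sum fun j hj => Finset.sum_le_sum_of_subset_of_nonneg
              (Finset.range_subset_range.mpr (le_of_lt (Finset.mem_range.mp hj)))
              (fun k _ _ => sq_nonneg _)
        _ = ∑ p ∈ Finset.range n ×ˢ Finset.range n, c p ^ 2 :=
            (Finset.sum_product (Finset.range n) (Finset.range n) (fun p => c p ^ 2)).symm
        _ ≤ ∑' p : ℕ × ℕ, c p ^ 2 := Summable.sum_le_tsum _ (fun p _ => sq_nonneg _) hc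
    have key2 : ∀ i j, i < j →
        ∫ ω, ((∑ k ∈ Finset.range i, c (i, k) * X k ω) * X i ω) *
          ((∑ k ∈ Finset.range j, c (j, k) * X k ω) * X j ω) ∂ν = 0 := by
      intro i j hij
      have hW : ProbabilityTheory.IndepFun
          (fun ω => ((∑ k ∈ Finset.range i, c (i, k) * X k ω) * X i ω) *
            (∑ k ∈ Finset.range j, c (j, k) * X k ω)) (X j) ν := by
        refine indep_causal_aux hXm hindep (s := Finset.range j) (by simp)
          (φ := fun v => ((∑ k ∈ Finset.range i, c (i, k) * v k) * v i) *
            (∑ k ∈ Finset.range j, c (j, k) * v k)) ?_ ?_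
        · exact ((Finset.measurable_sum _ fun k _ => (measurable_pi_apply k).const_mul _).mul
            (measurable_pi_apply i)).mul
            (Finset.measurable_sum _ fun k _ => (measurable_pi_apply k).const_mul _)
        · intro v w h
          have hi : v i = w i := h i (Finset.mem_range.mpr hij)
          have h1 : ∑ k ∈ Finset.range i, c (i, k) * v k
              = ∑ k ∈ Finset.range i, c (i, k) * w k :=
            Finset.sum_congr rfl fun k hk => by
              rw [h k (Finset.mem_range.mpr (lt_trans (Finset.mem_range.mp hk) hij))]
          have h2 : ∑ k ∈ Finset.range j, c (j, k) * v k
              = ∑ k ∈ Finset.range j, c (j, k) * w k :=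
            Finset.sum_congr rfl fun k hk => by rw [h k hk]
          simp only [hi, h1, h2]
      have hWm : Measurable (fun ω => ((∑ k ∈ Finset.range i, c (i, k) * X k ω) * X i ω) *
          (∑ k ∈ Finset.range j, c (j, k) * X k ω)) := ((hSm i).mul (hXm i)).mul (hSm j)
      have hint := hW.integral_fun_mul_eq_mul_integral hWm.aestronglyMeasurable (hXm j).aestronglyMeasurable
      calc ∫ ω, ((∑ k ∈ Finset.range i, c (i, k) * X k ω) * X i ω) *
            ((∑ k ∈ Finset.range j, c (j, k) * X k ω) * X j ω) ∂ν
          = ∫ ω, (((∑ k ∈ Finset.range i, c (i, k) * X k ω) * X i ω) *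
            (∑ k ∈ Finset.range j, c (j, k) * X k ω)) * X j ω ∂ν :=
            integral_congr_ae (Filter.Eventually.of_forall fun ω => by ring)
        _ = (∫ ω, ((∑ k ∈ Finset.range i, c (i, k) * X k ω) * X i ω) *
            (∑ k ∈ Finset.range j, c (j, k) * X k ω) ∂ν) * ∫ ω, X j ω ∂ν := hint
        _ = 0 := by rw [hcent j, mul_zero]
    have horth2 : ∀ i j, i ≠ j →
        ∫ ω, ((∑ k ∈ Finset.range i, c (i, k) * X k ω) * X i ω) *
          ((∑ k ∈ Finset.range j, c (j, k) * X k ω) * X j ω) ∂ν = 0 := by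
      intro i j hij
      rcases hij.lt_or_gt with h | h
      · exact key2 i j h
      · have := key2 j i h
        rw [← this]
        exact integral_congr_ae (Filter.Eventually.of_forall fun ω => by ring)
    obtain ⟨g, hg, htend⟩ := orth_sum_L2
      (fun j ω => (∑ k ∈ Finset.range j, c (j, k) * X k ω) * X j ω) hf2mem horth2 hsum2
    refine ⟨g, hg, ?_⟩
    have hIcc : ∀ N : ℕ, (fun ω : E => (∑ j ∈ Finset.Icc 1 N,
          (∑ k ∈ Finset.range j, c (j, k) * X k ω) * X j ω) - g ω)
        = fun ω => (∑ j ∈ Finset.range (N + 1),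
          (∑ k ∈ Finset.range j, c (j, k) * X k ω) * X j ω) - g ω := by
      intro N; funext ω; congr 1
      apply Finset.sum_subset
      · intro x hx; simp only [Finset.mem_Icc, Finset.mem_range] at hx ⊢; omega
      · intro x hx hnx
        have hx0 : x = 0 := by
          simp only [Finset.mem_Icc, Finset.mem_range] at hx hnx; omega
        subst hx0; simp
    simpa only [hIcc] using htend
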